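/- Let n = 2k and s with gcd(s, 2k) = 1. In characteristic 2, for any b ∈ F_{2^{2k}} \ {0, 1}, the polynomial b(x + u)^{2^s+1} + (x + v)^{2^s+1}, where u = (b^{2^{-s}} + 1)/(b + b^{2^{-s}}) and v = (b^{2^{-s}+1} + b)/(b + b^{2^{-s}}), equals (b+1)·(x^{2^s+1} + x + A(b)) with A(b) = b(b+1)^{2^s+2^{-s}}/(b + b^{2^{-s}})^{2^s+1}. -/

import Mathlib

open Polynomial

lemma iter_fix {F : Type*} [Monoid F] (c : F) (m : ℕ) (h : c ^ m = c) :
    ∀ x, c ^ (m ^ x) = c := by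
  intro x
  induction x with
  | zero => simp
  | succ n ih => rw [pow_succ, pow_mul, ih, h]


/-- For `b ∈ F_{2^{2k}} \ {0,1}`, with `b'` the inverse Frobenius
image of `b` (so `b'^{2^s} = b`), `u = (b'+1)/(b+b')`, `v = (b'·b+b)/(b+b')`
(note `b^{2^{-s}+1} = b'·b`), the polynomial
`b(x+u)^{2^s+1} + (x+v)^{2^s+1}` equals `(b+1)(x^{2^s+1} + x + A(b))` where
`A(b) = b(b+1)^{2^s+2^{-s}}/(b+b')^{2^s+1} = b((b+1)^{2^s}(b'+1))/(b+b')^{2^s+1}`. -/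
theorem stmt17 (F : Type*) [Field F] [Fintype F] (k s : ℕ) (hk : 0 < k) (hs : 0 < s)
    (hcard : Fintype.card F = 2 ^ (2 * k)) (hgcd : Nat.gcd s (2 * k) = 1)
    (b : F) (hb0 : b ≠ 0) (hb1 : b ≠ 1)
    (b' : F) (hb' : b' ^ 2 ^ s = b)
    (u v : F) (hu : u = (b' + 1) / (b + b')) (hv : v = (b' * b + b) / (b + b')) :
    C b * (X + C u) ^ (2 ^ s + 1) + (X + C v) ^ (2 ^ s + 1)
      = C (b + 1) *
          (X ^ (2 ^ s + 1) + X
            + C (b * ((b + 1) ^ 2 ^ s * (b' + 1)) / (b + b') ^ (2 ^ s + 1)) : F[X]) := by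
  -- characteristic 2
  haveI hchar : CharP F 2 := by
    have h := FiniteField.cast_card_eq_zero F
    rw [hcard] at h
    push_cast at h
    have h2 : (2 : F) = 0 := pow_eq_zero_iff (n := 2*k) (by positivity) |>.mp h
    have hd : ringChar F ∣ 2 := ringChar.dvd (by exact_mod_cast h2)
    have hp : (ringChar F).Prime := CharP.char_is_prime F (ringChar F)
    have : ringChar F = 2 := (Nat.prime_dvd_prime_iff_eq hp Nat.prime_two).mp hd
    exact this ▸ ringChar.charP F
  have hfrob : ∀ x y : F, (x + y) ^ 2 ^ s = x ^ 2 ^ s + y ^ 2 ^ s := fun x y =>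
    add_pow_char_pow x y 2 s
  -- b + b' ≠ 0
  have hd : b + b' ≠ 0 := by
    intro hbd
    have hbb : b' = b := by
      have h' : b' = -b := by linear_combination hbd
      rw [h', CharTwo.neg_eq]
    have hfix : b ^ 2 ^ s = b := by conv_lhs => rw [← hbb]
                                    exact hb'
    obtain ⟨x, -, hx⟩ := Nat.exists_mul_mod_eq_one_of_coprime hgcd (by omega)
    obtain ⟨y, hy⟩ : ∃ y, s * x = 2 * k * y + 1 := by
      refine ⟨s * x / (2 * k), ?_⟩
      have := Nat.div_add_mod (s * x) (2 * k)
      omega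
    have h1 : b ^ 2 ^ (s * x) = b := by
      rw [pow_mul]
      exact iter_fix b (2 ^ s) hfix x
    have h2 : b ^ 2 ^ (2 * k * y) = b := by
      rw [pow_mul 2 (2 * k) y]
      exact iter_fix b (2 ^ (2 * k)) (by rw [← hcard]; exact FiniteField.pow_card b) y
    rw [hy, pow_succ, pow_mul, h2] at h1
    have hbsq : b * b = b * 1 := by rw [mul_one, ← sq]; exact h1
    exact hb1 (mul_left_cancel₀ hb0 hbsq)
  have hdq : (b + b') ^ 2 ^ s = b ^ 2 ^ s + b := by rw [hfrob, hb']
  have hne : b ^ 2 ^ s + b ≠ 0 := hdq ▸ pow_ne_zero _ hd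
  have huq : u ^ 2 ^ s = (b + 1) / (b ^ 2 ^ s + b) := by
    rw [hu, div_pow, hfrob, hb', one_pow, hdq]
  have hvu : v = b * u := by rw [hu, hv]; field_simp
  have h1 : b * u + v = 0 := by rw [hvu]; exact CharTwo.add_self_eq_zero _
  have h2 : b * u ^ 2 ^ s + v ^ 2 ^ s = b + 1 := by
    rw [hvu, mul_pow, huq]
    field_simp
    ring
  have h3 : b * (u ^ 2 ^ s * u) + v ^ 2 ^ s * v
      = (b + 1) * (b * ((b + 1) ^ 2 ^ s * (b' + 1)) / (b + b') ^ (2 ^ s + 1)) := by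
    rw [hvu, mul_pow, huq, hu, pow_succ, hdq, hfrob b 1, one_pow]
    field_simp
    ring
  have hexp : ∀ c : F, (X + C c) ^ (2 ^ s + 1)
      = X ^ 2 ^ s * X + C c * X ^ 2 ^ s + C (c ^ 2 ^ s) * X + C (c ^ 2 ^ s * c) := by
    intro c
    rw [pow_succ, add_pow_char_pow X (C c) 2 s]
    simp only [C_mul, C_pow]
    ring
  rw [hexp u, hexp v]
  have key : C b * (X ^ 2 ^ s * X + C u * X ^ 2 ^ s + C (u ^ 2 ^ s) * X + C (u ^ 2 ^ s * u))
      + (X ^ 2 ^ s * X + C v * X ^ 2 ^ s + C (v ^ 2 ^ s) * X + C (v ^ 2 ^ s * v))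
      = C (b + 1) * (X ^ 2 ^ s * X) + C (b * u + v) * X ^ 2 ^ s
        + C (b * u ^ 2 ^ s + v ^ 2 ^ s) * X + C (b * (u ^ 2 ^ s * u) + v ^ 2 ^ s * v) := by
    simp only [map_add, map_mul, map_one]
    ring
  rw [key, h1, h2, h3, map_mul]
  simp only [C_0, zero_mul, add_zero, pow_succ]
  ring
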